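/- arXiv:1001.3662 — 2 statements merged into one kernel-verified Lean document; each statement's English description precedes it below -/
import Mathlib

section
/- Let $k$ be an algebraically closed field of characteristic $p > 0$ and let $V$ be a finite-dimensional $k$-vector space equipped with a bijective $p$-linear endomorphism $f$ (i.e., $f$ is additive, bijective, and $f(cv) = c^p f(v)$ for all $c \in k$, $v \in V$). Then $V$ has a $k$-basis $e_1, \dots, e_r$ with $f(e_i) = e_i$ for each $i$. -/
open Submodule Polynomial

section Aux

variable {k : Type*} [Field k] [IsAlgClosed k] {p : ℕ} [Fact p.Prime] [CharP k p]

/-- Artin–Schreier equations are solvable over an algebraically closed field. -/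
lemma aux_artin_schreier (a : k) : ∃ t : k, t ^ p - t = a := by
  have hp : p.Prime := Fact.out
  have h2 : 2 ≤ p := hp.two_le
  set q : k[X] := X ^ p - (X + C a) with hq
  have hdeg : q.degree = p := by
    rw [hq]
    rw [degree_sub_eq_left_of_degree_lt]
    · exact degree_X_pow p
    · rw [degree_X_pow]
      refine lt_of_le_of_lt (degree_add_le _ _) ?_
      rw [max_lt_iff]
      constructor
      · rw [degree_X]; exact_mod_cast by omega
      · exact lt_of_le_of_lt (degree_C_le) (by exact_mod_cast by positivity)
  have hne : q.degree ≠ 0 := by rw [hdeg]; exact_mod_cast by omega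
  obtain ⟨t, ht⟩ := IsAlgClosed.exists_root q hne
  refine ⟨t, ?_⟩
  have := ht
  rw [IsRoot, hq] at this
  simp only [eval_sub, eval_add, eval_pow, eval_X, eval_C] at this
  linear_combination this

variable {V : Type*} [AddCommGroup V] [Module k V]

/-- Key lemma: a bijective `p`-linear endomorphism of a nonzero finite-dimensional
vector space over an algebraically closed field has a nonzero fixed vector. -/
lemma aux_exists_fixed [FiniteDimensional k V] (f : V →+ V)
    (hinj : Function.Injective f)
    (hsemi : ∀ (c : k) (v : V), f (c • v) = c ^ p • f v)
    (w : V) (hw : w ≠ 0) :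
    ∃ v : V, v ≠ 0 ∧ f v = v := by
  classical
  have hp : p.Prime := Fact.out
  set g : ℕ → V := fun i => f^[i] w with hg
  have hfg : ∀ i, f (g i) = g (i + 1) := fun i =>
    (Function.iterate_succ_apply' f i w).symm
  -- there is a first dependence
  have hex : ∃ n, g n ∈ span k (Set.range fun i : Fin n => g i) := by
    by_contra hall
    push_neg at hall
    have hli : ∀ n, LinearIndependent k (fun i : Fin n => g i) := by
      intro n
      induction n with
      | zero => exact linearIndependent_empty_type
      | succ n ih =>
        have he : (fun i : Fin (n + 1) => g i) =
            Fin.snoc (fun i : Fin n => g i) (g n) := by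
          funext i
          refine Fin.lastCases ?_ (fun j => ?_) i
          · simp [Fin.snoc_last]
          · simp [Fin.snoc_castSucc]
        rw [he, linearIndependent_fin_snoc]
        exact ⟨ih, hall n⟩
    have h1 := (hli (Module.finrank k V + 1)).fintype_card_le_finrank
    simp at h1
  obtain ⟨m, hPm, hmin⟩ : ∃ n, g n ∈ span k (Set.range fun i : Fin n => g i) ∧
      ∀ j < n, g j ∉ span k (Set.range fun i : Fin j => g i) :=
    ⟨Nat.find hex, Nat.find_spec hex, fun j hj => Nat.find_min hex hj⟩
  have hm0 : m ≠ 0 := by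
    rintro rfl
    apply hw
    have h0 : (Set.range fun i : Fin 0 => g i) = ∅ := Set.range_eq_empty _
    rw [h0, span_empty, mem_bot] at hPm
    simpa [hg] using hPm
  obtain ⟨m', rfl⟩ : ∃ m', m = m' + 1 := ⟨m - 1, (Nat.succ_pred_eq_of_ne_zero hm0).symm⟩
  obtain ⟨a, ha⟩ := (mem_span_range_iff_exists_fun k).mp hPm
  -- the lowest coefficient is nonzero
  have ha0 : a 0 ≠ 0 := by
    intro h0
    have hroots : ∀ i : Fin m', ∃ r : k, r ^ p = a i.succ := fun i =>
      IsAlgClosed.exists_pow_nat_eq _ hp.pos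
    choose b hb using hroots
    have hfsum : f (∑ i : Fin m', b i • g i) = g (m' + 1) := by
      rw [map_sum]
      have : ∀ i : Fin m', f (b i • g i) = a i.succ • g (i + 1) := by
        intro i
        rw [hsemi, hb, hfg]
      rw [Finset.sum_congr rfl fun i _ => this i]
      rw [← ha, Fin.sum_univ_succ, h0, zero_smul, zero_add]
      refine Finset.sum_congr rfl fun i _ => ?_
      simp [Fin.val_succ]
    rw [show g (m' + 1) = f (g m') from (hfg m').symm] at hfsum
    have heq := hinj hfsum
    apply hmin m' (Nat.lt_succ_self m')
    rw [← heq]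
    exact sum_mem fun i _ => smul_mem _ _ (subset_span ⟨i, rfl⟩)
  -- extend coefficients to ℕ
  set a' : ℕ → k := fun i => if h : i < m' + 1 then a ⟨i, h⟩ else 0 with ha'
  have ha'0 : a' 0 ≠ 0 := by simpa [ha'] using ha0
  have hgm : g (m' + 1) = ∑ i ∈ Finset.range (m' + 1), a' i • g i := by
    rw [← ha, ← Fin.sum_univ_eq_sum_range (fun i => a' i • g i) (m' + 1)]
    refine Finset.sum_congr rfl fun i _ => ?_
    simp [ha', i.isLt]
    intro h; exact absurd h (by have := i.isLt; omega)
  -- the polynomial whose root gives the fixed vector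
  set N := p ^ (m' + 1) - 1 with hN
  have hNpos : 0 < N := by
    have : p ^ 1 ≤ p ^ (m' + 1) := Nat.pow_le_pow_right hp.pos (by omega)
    have h2 : 2 ≤ p := hp.two_le
    simp only [pow_one] at this
    omega
  set q : k[X] := (∑ i ∈ Finset.range (m' + 1),
      C (a' i ^ p ^ (m' - i)) * X ^ (p ^ (m' + 1 - i) - 1)) - 1 with hq
  have hcoeff : q.coeff N = a' 0 ^ p ^ m' := by
    rw [hq]
    rw [Polynomial.coeff_sub, Polynomial.finset_sum_coeff]
    have h1 : (1 : k[X]).coeff N = 0 := by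
      rw [Polynomial.coeff_one, if_neg (by omega)]
    rw [h1, sub_zero]
    rw [Finset.sum_eq_single 0]
    · rw [coeff_C_mul, coeff_X_pow, if_pos (by simp [hN]), mul_one]
      simp
    · intro i hi hi0
      rw [coeff_C_mul, coeff_X_pow, if_neg, mul_zero]
      have hilt : i < m' + 1 := Finset.mem_range.mp hi
      have hlt : p ^ (m' + 1 - i) < p ^ (m' + 1) :=
        Nat.pow_lt_pow_right hp.one_lt (by omega)
      have hge : 1 ≤ p ^ (m' + 1 - i) := Nat.one_le_pow _ _ hp.pos
      omega
    · intro h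
      exact absurd (Finset.mem_range.mpr (by omega)) h
  have hqne : q ≠ 0 := fun h => by
    rw [h, Polynomial.coeff_zero] at hcoeff
    exact pow_ne_zero _ ha'0 hcoeff.symm
  have hqdeg : q.degree ≠ 0 := by
    intro h
    have h1 : N ≤ q.natDegree := Polynomial.le_natDegree_of_ne_zero (by
      rw [hcoeff]; exact pow_ne_zero _ ha'0)
    have h2 : q.degree = (q.natDegree : WithBot ℕ) := Polynomial.degree_eq_natDegree hqne
    rw [h2] at h
    have : q.natDegree = 0 := by exact_mod_cast h
    omega
  obtain ⟨t, ht⟩ := IsAlgClosed.exists_root q hqdeg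
  have hsum : ∑ i ∈ Finset.range (m' + 1),
      a' i ^ p ^ (m' - i) * t ^ (p ^ (m' + 1 - i) - 1) = 1 := by
    have := ht
    rw [IsRoot, hq] at this
    simp only [eval_sub, eval_finset_sum, eval_mul, eval_pow, eval_C, eval_X,
      eval_one, sub_eq_zero] at this
    exact this
  have ht0 : t ≠ 0 := by
    rintro rfl
    rw [Finset.sum_eq_zero] at hsum
    · exact one_ne_zero hsum.symm
    · intro i hi
      have hilt : i < m' + 1 := Finset.mem_range.mp hi
      have hge : p ≤ p ^ (m' + 1 - i) := by
        calc p = p ^ 1 := (pow_one p).symm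
        _ ≤ p ^ (m' + 1 - i) := Nat.pow_le_pow_right hp.pos (by omega)
      rw [zero_pow (by have := hp.two_le; omega), mul_zero]
  -- the coefficients of the fixed vector
  set x : ℕ → k := fun j => ∑ i ∈ Finset.range (j + 1),
      a' i ^ p ^ (j - i) * t ^ p ^ (j - i + 1) with hx
  have hx0 : x 0 = a' 0 * t ^ p := by simp [hx]
  have hxs : ∀ j, x (j + 1) = x j ^ p + a' (j + 1) * t ^ p := by
    intro j
    rw [hx]
    simp only
    rw [Finset.sum_range_succ]
    congr 1
    · rw [sum_pow_char]
      refine Finset.sum_congr rfl fun i hi => ?_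
      have hij : i ≤ j := Nat.lt_succ_iff.mp (Finset.mem_range.mp hi)
      have e1 : j + 1 - i = (j - i) + 1 := by omega
      have e2 : j + 1 - i + 1 = (j - i + 1) + 1 := by omega
      rw [e2, e1, mul_pow, ← pow_mul, ← pow_mul, ← pow_succ, ← pow_succ]
    · simp
  have hxm : x m' = t := by
    rw [hx]
    simp only
    calc ∑ i ∈ Finset.range (m' + 1), a' i ^ p ^ (m' - i) * t ^ p ^ (m' - i + 1)
        = ∑ i ∈ Finset.range (m' + 1),
            t * (a' i ^ p ^ (m' - i) * t ^ (p ^ (m' + 1 - i) - 1)) := by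
          refine Finset.sum_congr rfl fun i hi => ?_
          have hilt : i < m' + 1 := Finset.mem_range.mp hi
          have he : m' - i + 1 = m' + 1 - i := by omega
          have hge : 1 ≤ p ^ (m' + 1 - i) := Nat.one_le_pow _ _ hp.pos
          have e3 : p ^ (m' - i + 1) = p ^ (m' + 1 - i) - 1 + 1 := by rw [he]; omega
          rw [e3, pow_succ]
          ring
      _ = t * ∑ i ∈ Finset.range (m' + 1),
            a' i ^ p ^ (m' - i) * t ^ (p ^ (m' + 1 - i) - 1) := by
          rw [Finset.mul_sum]
      _ = t := by rw [hsum, mul_one]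
  -- the fixed vector
  set v : V := ∑ i ∈ Finset.range (m' + 1), x i • g i with hv
  have hfv : f v = v := by
    have h1 : f v = (∑ i ∈ Finset.range m', (x i ^ p) • g (i + 1))
        + ((t ^ p * a' 0) • g 0 + ∑ i ∈ Finset.range m', (t ^ p * a' (i + 1)) • g (i + 1)) := by
      have h2 : f v = ∑ i ∈ Finset.range (m' + 1), (x i ^ p) • g (i + 1) := by
        rw [hv, map_sum]
        exact Finset.sum_congr rfl fun i _ => by rw [hsemi, hfg]
      rw [h2, Finset.sum_range_succ, hxm, hgm, Finset.smul_sum]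
      congr 1
      rw [Finset.sum_range_succ']
      simp only [smul_smul]
      rw [add_comm]
    have h3 : v = (∑ i ∈ Finset.range m', (x i ^ p) • g (i + 1))
        + ((t ^ p * a' 0) • g 0 + ∑ i ∈ Finset.range m', (t ^ p * a' (i + 1)) • g (i + 1)) := by
      rw [hv, Finset.sum_range_succ']
      have h4 : ∀ i ∈ Finset.range m', x (i + 1) • g (i + 1)
          = (x i ^ p) • g (i + 1) + (t ^ p * a' (i + 1)) • g (i + 1) := by
        intro i _
        rw [hxs i, add_smul, mul_comm (a' (i + 1)) (t ^ p)]
      rw [Finset.sum_congr rfl h4, Finset.sum_add_distrib, hx0, mul_comm (a' 0) (t ^ p)]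
      abel
    rw [h1, ← h3]
  have hvne : v ≠ 0 := by
    intro h0
    apply hmin m' (Nat.lt_succ_self m')
    have h1 : v = (∑ i ∈ Finset.range m', x i • g i) + t • g m' := by
      rw [hv, Finset.sum_range_succ, hxm]
    rw [h0] at h1
    have h2 : g m' = t⁻¹ • (t • g m') := by
      rw [smul_smul, inv_mul_cancel₀ ht0, one_smul]
    have h3 : t • g m' = -∑ i ∈ Finset.range m', x i • g i :=
      eq_neg_of_add_eq_zero_right h1.symm
    rw [h2, h3]
    refine smul_mem _ _ (neg_mem (sum_mem fun i hi => smul_mem _ _ (subset_span ?_)))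
    exact ⟨⟨i, Finset.mem_range.mp hi⟩, rfl⟩
  exact ⟨v, hvne, hfv⟩

end Aux

/-- Let `k` be an algebraically closed field of characteristic `p > 0` and
`V` a finite-dimensional `k`-vector space with a bijective `p`-linear endomorphism `f`
(additive, bijective, `f (c • v) = c ^ p • f v`).  Then `V` has a basis `e₁, …, e_r`
with `f eᵢ = eᵢ` for each `i`. -/
theorem stmt3 (k : Type*) [Field k] [IsAlgClosed k] (p : ℕ) [Fact p.Prime] [CharP k p]
    (V : Type*) [AddCommGroup V] [Module k V] [FiniteDimensional k V]
    (f : V →+ V) (hbij : Function.Bijective f)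
    (hsemi : ∀ (c : k) (v : V), f (c • v) = c ^ p • f v) :
    ∃ b : Module.Basis (Fin (Module.finrank k V)) k V, ∀ i, f (b i) = b i := by
  classical
  have hp : p.Prime := Fact.out
  set S : Set V := {v | f v = v} with hS
  set U : Submodule k V := Submodule.span k S with hU
  -- f maps U into U
  have hfU : ∀ u ∈ U, f u ∈ U := by
    intro u hu
    induction hu using Submodule.span_induction with
    | mem x hx => rw [hx]; exact Submodule.subset_span hx
    | zero => rw [map_zero]; exact zero_mem _
    | add x y hx hy ihx ihy => rw [map_add]; exact add_mem ihx ihy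
    | smul c x hx ihx => rw [hsemi]; exact smul_mem _ _ ihx
  -- f maps U onto U
  have hsurjU : ∀ u ∈ U, ∃ w ∈ U, f w = u := by
    intro u hu
    induction hu using Submodule.span_induction with
    | mem x hx => exact ⟨x, Submodule.subset_span hx, hx⟩
    | zero => exact ⟨0, zero_mem _, map_zero f⟩
    | add x y hx hy ihx ihy =>
      obtain ⟨w₁, hw₁, h₁⟩ := ihx
      obtain ⟨w₂, hw₂, h₂⟩ := ihy
      exact ⟨w₁ + w₂, add_mem hw₁ hw₂, by rw [map_add, h₁, h₂]⟩
    | smul c x hx ihx =>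
      obtain ⟨w, hwU, hww⟩ := ihx
      obtain ⟨r, hr⟩ := IsAlgClosed.exists_pow_nat_eq c (n := p) hp.pos
      exact ⟨r • w, smul_mem _ _ hwU, by rw [hsemi, hr, hww]⟩
  -- f - id is surjective on U
  have hadj : ∀ u ∈ U, ∃ w ∈ U, f w - w = u := by
    have key : ∀ u ∈ U, ∀ c : k, ∃ w ∈ U, f w - w = c • u := by
      intro u hu
      induction hu using Submodule.span_induction with
      | mem x hx =>
        intro c
        obtain ⟨t, htc⟩ := aux_artin_schreier (p := p) c
        refine ⟨t • x, smul_mem _ _ (Submodule.subset_span hx), ?_⟩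
        rw [hsemi, hx, ← sub_smul, htc]
      | zero => intro c; exact ⟨0, zero_mem _, by simp⟩
      | add x y hx hy ihx ihy =>
        intro c
        obtain ⟨w₁, hw₁, h₁⟩ := ihx c
        obtain ⟨w₂, hw₂, h₂⟩ := ihy c
        refine ⟨w₁ + w₂, add_mem hw₁ hw₂, ?_⟩
        rw [map_add, smul_add, ← h₁, ← h₂]
        abel
      | smul r x hx ihx =>
        intro c
        obtain ⟨w, hwU, hww⟩ := ihx (c * r)
        exact ⟨w, hwU, by rw [hww, mul_smul]⟩
    intro u hu
    obtain ⟨w, hwU, hww⟩ := key u hu 1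
    exact ⟨w, hwU, by rw [hww, one_smul]⟩
  -- the fixed vectors span V
  have hUtop : U = ⊤ := by
    by_contra hUne
    haveI : Nontrivial (V ⧸ U) :=
      Submodule.Quotient.nontrivial_iff.mpr (Ne.lt_top hUne).ne
    -- the induced map on the quotient
    have hlift : ∀ (x y : V), U.quotientRel x y →
        (Submodule.Quotient.mk (f x) : V ⧸ U) = Submodule.Quotient.mk (f y) := by
      intro x y hxy
      rw [Submodule.Quotient.eq]
      have hxyU : x - y ∈ U := (Submodule.quotientRel_def U).mp hxy
      have := hfU _ hxyU
      rwa [map_sub] at this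
    let fbar0 : (V ⧸ U) → (V ⧸ U) := fun z =>
      Quotient.liftOn' z (fun v => (Submodule.Quotient.mk (f v) : V ⧸ U)) hlift
    have hfbar0 : ∀ v : V, fbar0 (Submodule.Quotient.mk v)
        = Submodule.Quotient.mk (f v) := fun v => rfl
    set fbar : (V ⧸ U) →+ (V ⧸ U) :=
      { toFun := fbar0
        map_zero' := by
          rw [← Submodule.Quotient.mk_zero, hfbar0, map_zero]
        map_add' := by
          intro z₁ z₂
          obtain ⟨v₁, rfl⟩ := Submodule.Quotient.mk_surjective U z₁
          obtain ⟨v₂, rfl⟩ := Submodule.Quotient.mk_surjective U z₂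
          show fbar0 (Submodule.Quotient.mk v₁ + Submodule.Quotient.mk v₂)
            = fbar0 (Submodule.Quotient.mk v₁) + fbar0 (Submodule.Quotient.mk v₂)
          rw [← Submodule.Quotient.mk_add, hfbar0, hfbar0, hfbar0, map_add,
            Submodule.Quotient.mk_add] } with hfbar
    have hfbar_mk : ∀ v : V, fbar (Submodule.Quotient.mk v)
        = Submodule.Quotient.mk (f v) := fun v => hfbar0 v
    have hfbar_inj : Function.Injective fbar := by
      rw [injective_iff_map_eq_zero]
      intro z hz
      obtain ⟨v, rfl⟩ := Submodule.Quotient.mk_surjective U z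
      rw [hfbar_mk, Submodule.Quotient.mk_eq_zero] at hz
      obtain ⟨w, hwU, hww⟩ := hsurjU _ hz
      rw [Submodule.Quotient.mk_eq_zero]
      rw [← hbij.1 hww]
      exact hwU
    have hfbar_semi : ∀ (c : k) (z : V ⧸ U), fbar (c • z) = c ^ p • fbar z := by
      intro c z
      obtain ⟨v, rfl⟩ := Submodule.Quotient.mk_surjective U z
      rw [← Submodule.Quotient.mk_smul, hfbar_mk, hfbar_mk, hsemi,
        Submodule.Quotient.mk_smul]
    obtain ⟨z, hz⟩ := exists_ne (0 : V ⧸ U)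
    obtain ⟨vb, hvbne, hvbfix⟩ :=
      aux_exists_fixed (p := p) fbar hfbar_inj hfbar_semi z hz
    obtain ⟨v, rfl⟩ := Submodule.Quotient.mk_surjective U vb
    rw [hfbar_mk, Submodule.Quotient.eq] at hvbfix
    obtain ⟨w, hwU, hww⟩ := hadj _ (neg_mem hvbfix)
    have hfix : f (v + w) = v + w := by
      rw [map_add]
      have : f w = w - (f v - v) := by linear_combination (norm := abel) hww
      rw [this]
      abel
    have hvwU : v + w ∈ U := Submodule.subset_span hfix
    have hvU : v ∈ U := by
      have := sub_mem hvwU hwU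
      simpa using this
    exact hvbne (by rwa [Submodule.Quotient.mk_eq_zero])
  -- extract a basis from the spanning set of fixed vectors
  obtain ⟨s, hsS, hspan, hli⟩ := exists_linearIndependent k S
  have hstop : ⊤ ≤ span k (Set.range ((↑) : s → V)) := by
    rw [Subtype.range_coe, hspan, ← hU, hUtop]
  let b₀ : Module.Basis s k V := Module.Basis.mk hli hstop
  let e : s ≃ Fin (Module.finrank k V) := b₀.indexEquiv (Module.finBasis k V)
  refine ⟨b₀.reindex e, fun i => ?_⟩
  rw [Module.Basis.reindex_apply, Module.Basis.mk_apply]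
  exact hsS (e.symm i).2
end

section
/- Let $k$ be a perfect field of characteristic $p > 0$, $R = k[x_0,\dots,x_n]$, and write Frobenius as $F: \mathrm{Spec}(R') \to \mathrm{Spec}(R)$ with $R' = R$ viewed as an $R$-algebra via $r \mapsto r^p$. Let $\{b_{\bar e} = x_0^{e_0}\cdots x_n^{e_n} : 0 \leq e_i \leq p-1\}$ be the monomial basis of $R'$ over $R$ and $\{\tilde b_{\bar e}\}$ the dual basis of $\mathrm{Hom}_R(R', R)$. Then the $R'$-linear map $R' \to \mathrm{Hom}_R(R', R)$ sending $b_{\bar e} \mapsto \tilde b_{\overline{p-1} - \bar e}$ is an isomorphism of $R'$-modules, where $\overline{p-1} = (p-1, \dots, p-1)$. -/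
open MvPolynomial

/-- `R` regarded as an `R`-algebra via the Frobenius endomorphism `r ↦ r ^ p`;
this is the target `R'` of the Frobenius `Spec R' → Spec R`. -/
def FrobTwist (R : Type*) (p : ℕ) : Type _ := R

instance (R : Type*) [CommRing R] (p : ℕ) : CommRing (FrobTwist R p) := ‹CommRing R›

noncomputable instance (R : Type*) [CommRing R] (p : ℕ) [Fact p.Prime] [CharP R p] :
    Algebra R (FrobTwist R p) := (frobenius R p).toAlgebra

set_option maxHeartbeats 2000000 in
/-- Let `k` be a perfect field of characteristic `p > 0`,
`R = k[x₀,…,xₙ]`, and `R' = R` viewed as an `R`-algebra via `r ↦ r ^ p`.  Let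
`{b_ē = x₀^{e₀}⋯xₙ^{eₙ} : 0 ≤ eᵢ ≤ p-1}` be the monomial basis of `R'` over `R` and
`{b̃_ē}` the dual basis of `Hom_R(R', R)`.  Then the map `R' → Hom_R(R', R)` sending
`b_ē ↦ b̃_{(p-1)-ē}` is an isomorphism of `R'`-modules (`R'`-linearity of a map
`e : R' → Hom_R(R',R)` is expressed elementwise: `e (r' * s') t' = e s' (r' * t')`,
the `R'`-action on `Hom_R(R',R)` being through the domain). -/
theorem stmt9 (k : Type*) [Field k] (p : ℕ) [Fact p.Prime] [CharP k p] [PerfectRing k p]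
    (n : ℕ)
    (b : Module.Basis (Fin (n + 1) → Fin p) (MvPolynomial (Fin (n + 1)) k)
      (FrobTwist (MvPolynomial (Fin (n + 1)) k) p))
    (hb : ∀ e : Fin (n + 1) → Fin p,
      b e = (∏ i : Fin (n + 1), X i ^ (e i : ℕ) : MvPolynomial (Fin (n + 1)) k)) :
    ∃ e : FrobTwist (MvPolynomial (Fin (n + 1)) k) p ≃ₗ[MvPolynomial (Fin (n + 1)) k]
        (FrobTwist (MvPolynomial (Fin (n + 1)) k) p →ₗ[MvPolynomial (Fin (n + 1)) k]
          MvPolynomial (Fin (n + 1)) k),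
      (∀ v : Fin (n + 1) → Fin p,
          e (b v) = b.coord (fun i =>
            (⟨p - 1 - (v i : ℕ), by have := (Fact.out : p.Prime).pos; omega⟩ : Fin p))) ∧
      ∀ r' s' t' : FrobTwist (MvPolynomial (Fin (n + 1)) k) p,
        e (r' * s') t' = e s' (r' * t') := by
  classical
  have hp : p.Prime := Fact.out
  have hp1 : 1 ≤ p := hp.pos
  set R := MvPolynomial (Fin (n + 1)) k with hR
  set R' := FrobTwist R p with hR'
  let toR2 : R → R' := fun r => r
  -- the involution
  have hσlt : ∀ x : Fin p, p - 1 - (x : ℕ) < p := fun x => by omega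
  let σ : (Fin (n+1) → Fin p) → (Fin (n+1) → Fin p) := fun v i => ⟨p - 1 - (v i : ℕ), hσlt _⟩
  have hσinv : Function.Involutive σ := by
    intro v
    funext i
    apply Fin.ext
    have := (v i).isLt
    show p - 1 - (p - 1 - (v i : ℕ)) = (v i : ℕ)
    omega
  let e : R' ≃ₗ[R] (R' →ₗ[R] R) := b.equiv b.dualBasis hσinv.toPerm
  have he : ∀ v, e (b v) = b.coord (σ v) := by
    intro v
    show b.equiv b.dualBasis hσinv.toPerm (b v) = _
    rw [Module.Basis.equiv_apply, Module.Basis.coe_dualBasis]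
    rfl
  refine ⟨e, fun v => he v, ?_⟩
  -- smul description
  have hsmul : ∀ (r : R) (x : R'), r • x = toR2 (r ^ p) * x := by
    intro r x
    rw [Algebra.smul_def]
    rfl
  -- product of monomials (R-level)
  have hupd : ∀ (j : Fin (n+1)) (f : Fin (n+1) → ℕ) (a : ℕ),
      (X j ^ a : R) * ∏ i, X i ^ f i = ∏ i, X i ^ (Function.update f j (f j + a) i) := by
    intro j f a
    rw [Fintype.prod_eq_mul_prod_compl j (fun i => (X i ^ Function.update f j (f j + a) i : R)),
      Fintype.prod_eq_mul_prod_compl j (fun i => (X i ^ f i : R)),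
      Function.update_self, pow_add]
    have : ∏ i ∈ ({j}ᶜ : Finset (Fin (n+1))), (X i ^ Function.update f j (f j + a) i : R)
        = ∏ i ∈ ({j}ᶜ : Finset (Fin (n+1))), X i ^ f i := by
      refine Finset.prod_congr rfl fun i hi => ?_
      rw [Function.update_of_ne (by simpa using hi)]
    rw [this]
    ring
  -- coordinate evaluation
  have hcoord : ∀ u w : Fin (n+1) → Fin p, b.coord u (b w) = if w = u then 1 else 0 := by
    intro u w
    simp [Module.Basis.coord_apply, Module.Basis.repr_self, Finsupp.single_apply]
  -- multiplication by X j on the basis: the two cases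
  have hmulA : ∀ (j : Fin (n+1)) (v : Fin (n+1) → Fin p) (h : (v j : ℕ) + 1 < p),
      toR2 (X j) * b v = b (Function.update v j ⟨(v j : ℕ) + 1, h⟩) := by
    intro j v h
    rw [hb, hb]
    have key : (X j : R) * ∏ i, X i ^ (v i : ℕ)
        = ∏ i, X i ^ ((Function.update v j ⟨(v j : ℕ) + 1, h⟩ i : Fin p) : ℕ) := by
      have h1 := hupd j (fun i => (v i : ℕ)) 1
      rw [pow_one] at h1
      rw [h1]
      refine Finset.prod_congr rfl fun i _ => ?_
      by_cases hij : i = j <;> simp [Function.update_apply, hij]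
    exact key
  have hmulB : ∀ (j : Fin (n+1)) (v : Fin (n+1) → Fin p) (h : (v j : ℕ) = p - 1),
      toR2 (X j) * b v = (X j : R) • b (Function.update v j ⟨0, hp.pos⟩) := by
    intro j v h
    rw [hsmul, hb, hb]
    have key : (X j : R) * ∏ i, X i ^ (v i : ℕ)
        = (X j ^ p : R) * ∏ i, X i ^ ((Function.update v j ⟨0, hp.pos⟩ i : Fin p) : ℕ) := by
      have h1 := hupd j (fun i => (v i : ℕ)) 1
      rw [pow_one] at h1
      rw [h1, hupd j (fun i => ((Function.update v j ⟨0, hp.pos⟩ i : Fin p) : ℕ)) p]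
      refine Finset.prod_congr rfl fun i _ => ?_
      congr 1
      by_cases hij : i = j <;> simp [Function.update_apply, hij] <;> omega
    exact key
  -- the key X-lemma on basis vectors
  have hXbb : ∀ (j : Fin (n+1)) (v w : Fin (n+1) → Fin p),
      e (toR2 (X j) * b v) (b w) = e (b v) (toR2 (X j) * b w) := by
    intro j v w
    by_cases hv : (v j : ℕ) + 1 < p
    · rw [hmulA j v hv, he, he, hcoord]
      by_cases hw : (w j : ℕ) + 1 < p
      · rw [hmulA j w hw, hcoord]
        refine if_congr ?_ rfl rfl
        simp only [_root_.funext_iff, Fin.ext_iff]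
        constructor <;> intro hh i <;> have h1 := hh i <;> have h2 := hh j <;>
          have hvi := (v i).isLt <;> have hwi := (w i).isLt <;>
          by_cases hij : i = j
        · subst hij
          simp only [σ, Function.update_self, Fin.val_mk] at h2 ⊢
          omega
        · simp only [σ, Function.update_of_ne hij, Fin.val_mk] at h1 ⊢
          omega
        · subst hij
          simp only [σ, Function.update_self, Fin.val_mk] at h2 ⊢
          omega
        · simp only [σ, Function.update_of_ne hij, Fin.val_mk] at h1 ⊢
          omega
      · have hw' : (w j : ℕ) = p - 1 := by have := (w j).isLt; omega
        rw [hmulB j w hw', map_smul, smul_eq_mul, hcoord, if_neg, if_neg, mul_zero]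
        · intro hh
          have h2 := congrFun hh j
          rw [Fin.ext_iff] at h2
          have hvj := (v j).isLt
          have hwj := (w j).isLt
          simp only [σ, Function.update_self, Fin.val_mk] at h2
          omega
        · intro hh
          have h2 := congrFun hh j
          rw [Fin.ext_iff] at h2
          have hvj := (v j).isLt
          have hwj := (w j).isLt
          simp only [σ, Function.update_self, Fin.val_mk] at h2
          omega
    · have hv' : (v j : ℕ) = p - 1 := by have := (v j).isLt; omega
      rw [hmulB j v hv', map_smul, LinearMap.smul_apply, smul_eq_mul, he, he, hcoord]
      by_cases hw : (w j : ℕ) + 1 < p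
      · rw [hmulA j w hw, hcoord, if_neg, if_neg, mul_zero]
        · intro hh
          have h2 := congrFun hh j
          rw [Fin.ext_iff] at h2
          have hvj := (v j).isLt
          have hwj := (w j).isLt
          simp only [σ, Function.update_self, Fin.val_mk] at h2
          omega
        · intro hh
          have h2 := congrFun hh j
          rw [Fin.ext_iff] at h2
          have hvj := (v j).isLt
          have hwj := (w j).isLt
          simp only [σ, Function.update_self, Fin.val_mk] at h2
          omega
      · have hw' : (w j : ℕ) = p - 1 := by have := (w j).isLt; omega
        rw [hmulB j w hw', map_smul, smul_eq_mul, hcoord]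
        refine congrArg (fun z => (X j : R) * z) ?_
        refine if_congr ?_ rfl rfl
        simp only [_root_.funext_iff, Fin.ext_iff]
        constructor <;> intro hh i <;> have h1 := hh i <;>
          have hvi := (v i).isLt <;> have hwi := (w i).isLt <;> by_cases hij : i = j
        · subst hij
          simp only [σ, Function.update_self, Fin.val_mk] at h1 ⊢
          omega
        · simp only [σ, Function.update_of_ne hij, Fin.val_mk] at h1 ⊢
          omega
        · subst hij
          simp only [σ, Function.update_self, Fin.val_mk] at h1 ⊢
          omega
        · simp only [σ, Function.update_of_ne hij, Fin.val_mk] at h1 ⊢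
          omega
  -- upgrade to all s', t' by linearity
  have hX : ∀ (j : Fin (n+1)) (s' t' : R'), e (toR2 (X j) * s') t' = e s' (toR2 (X j) * t') := by
    intro j
    have hcomp : (e.toLinearMap ∘ₗ Algebra.lmul R R' (toR2 (X j)))
        = (LinearMap.lcomp R R (Algebra.lmul R R' (toR2 (X j)))) ∘ₗ e.toLinearMap := by
      apply b.ext
      intro v
      apply b.ext
      intro w
      exact hXbb j v w
    intro s' t'
    have h2 := congrFun (congrArg (fun f => (DFunLike.coe (f s'))) hcomp) t'
    exact h2
  -- key lemma for all r
  have key : ∀ (r : R) (s' t' : R'), e (toR2 r * s') t' = e s' (toR2 r * t') := by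
    intro r
    induction r using MvPolynomial.induction_on with
    | C a =>
      intro s' t'
      obtain ⟨c, hc⟩ : ∃ c : k, c ^ p = a := ⟨(frobeniusEquiv k p).symm a, by
        have := (frobeniusEquiv k p).apply_symm_apply a
        rwa [frobeniusEquiv_apply, frobenius_def] at this⟩
      have h1 : ∀ x : R', toR2 (C a) * x = (C c : R) • x := by
        intro x
        rw [hsmul, ← map_pow, hc]
      rw [h1, h1, map_smul, LinearMap.smul_apply, smul_eq_mul, map_smul, smul_eq_mul]
    | add q r hq hr =>
      intro s' t'
      have hq' := hq s' t'
      have hr' := hr s' t'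
      have e1 : toR2 (q + r) * s' = toR2 q * s' + toR2 r * s' := add_mul q r s'
      have e2 : toR2 (q + r) * t' = toR2 q * t' + toR2 r * t' := add_mul q r t'
      rw [e1, e2, map_add, LinearMap.add_apply, map_add, hq', hr']
    | mul_X q j hq =>
      intro s' t'
      have h1 : toR2 (q * X j) * s' = toR2 (X j) * (toR2 q * s') := by
        show toR2 q * toR2 (X j) * s' = _
        ring
      have h2 : toR2 (q * X j) * t' = toR2 q * (toR2 (X j) * t') := by
        show toR2 q * toR2 (X j) * t' = _
        ring
      rw [h1, h2, hX j (toR2 q * s') t', hq s' (toR2 (X j) * t')]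
  intro r' s' t'
  exact key r' s' t'
end
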